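/- Define e₁, e₂ : ℂ⁴ → ℂ by e₁(x₁,x₂,x₃,x₄) = x₂ + x₄ + x₁x₃ and e₂(x₁,x₂,x₃,x₄) = −x₁ − x₃ + x₂x₄. The gradients ∇e₁(x) = (x₃, 1, x₁, 1) and ∇e₂(x) = (−1, x₄, −1, x₂) are linearly dependent at x ∈ ℂ⁴ if and only if x = (−a⁻¹, a, −a⁻¹, a) for some a ∈ ℂ∖{0}; at such a point the characteristic polynomial of M(x) has the repeated root a. Consequently, if the characteristic polynomial of M(x) has three distinct roots, the differential of (e₁,e₂) at x is surjective. -/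

import Mathlib

open Matrix Polynomial

/-- The Noumi–Yamada topological monodromy matrix `M(x₁,x₂,x₃,x₄)`. -/
def NYmonodromy (x₁ x₂ x₃ x₄ : ℂ) : Matrix (Fin 3) (Fin 3) ℂ :=
  !![x₄, 0, x₁ * x₄ + 1;
     1, 0, x₁;
     x₃, 1, x₁ * x₃ + x₂]

/-- `e₁(x₁,x₂,x₃,x₄) = x₂ + x₄ + x₁x₃`. -/
def NYe₁ (x : Fin 4 → ℂ) : ℂ := x 1 + x 3 + x 0 * x 2

/-- `e₂(x₁,x₂,x₃,x₄) = −x₁ − x₃ + x₂x₄`. -/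
def NYe₂ (x : Fin 4 → ℂ) : ℂ := -(x 0) - x 2 + x 1 * x 3

noncomputable abbrev NYpr (i : Fin 4) : (Fin 4 → ℂ) →L[ℂ] ℂ := ContinuousLinearMap.proj i

noncomputable def NYL1 (p : Fin 4 → ℂ) : (Fin 4 → ℂ) →L[ℂ] ℂ :=
  (NYpr 1 + NYpr 3) + (p 0 • NYpr 2 + p 2 • NYpr 0)

noncomputable def NYL2 (p : Fin 4 → ℂ) : (Fin 4 → ℂ) →L[ℂ] ℂ :=
  ((-NYpr 0) - NYpr 2) + (p 1 • NYpr 3 + p 3 • NYpr 1)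

theorem NYL1app (p w : Fin 4 → ℂ) : NYL1 p w = w 1 + w 3 + p 0 * w 2 + p 2 * w 0 := by
  simp [NYL1, smul_eq_mul]; ring

theorem NYL2app (p w : Fin 4 → ℂ) : NYL2 p w = -(w 0) - w 2 + p 1 * w 3 + p 3 * w 1 := by
  simp [NYL2, smul_eq_mul]; ring

theorem NYhder (p : Fin 4 → ℂ) :
    HasFDerivAt (fun x : Fin 4 → ℂ => (NYe₁ x, NYe₂ x)) ((NYL1 p).prod (NYL2 p)) p := by
  have hp : ∀ i : Fin 4, HasFDerivAt (fun x : Fin 4 → ℂ => x i) (NYpr i) p :=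
    fun i => (NYpr i).hasFDerivAt
  exact HasFDerivAt.prodMk (((hp 1).add (hp 3)).add ((hp 0).mul (hp 2)))
    (((hp 0).neg.sub (hp 2)).add ((hp 1).mul (hp 3)))

theorem NYcharpoly (a b : ℂ) (h : a * b = 1) :
    (NYmonodromy (-b) a (-b) a).charpoly = (X - C a) ^ 2 * (X - C (b * b)) := by
  have hC : (C a : ℂ[X]) * C b = 1 := by rw [← C_mul, h, C_1]
  rw [Matrix.charpoly, Matrix.det_fin_three]
  simp only [Matrix.charmatrix_apply, NYmonodromy, Matrix.cons_val', Matrix.cons_val_zero,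
    Matrix.cons_val_one, Matrix.head_cons, Matrix.cons_val_fin_one, Matrix.empty_val',
    Matrix.head_fin_const, Matrix.cons_val_two, Matrix.tail_cons, Matrix.one_apply,
    Matrix.map_apply, Matrix.of_apply, Matrix.diagonal]
  norm_num [Fin.ext_iff]
  linear_combination (C a * C b + 1 - 2 * X * C b) * hC

theorem NYnosq (r s u a : ℂ) (hrs : r ≠ s) (hru : r ≠ u) (hsu : s ≠ u)
    (h : (X - C a) ^ 2 ∣ (X - C r) * (X - C s) * (X - C u)) : False := by
  set P : ℂ[X] := (X - C r) * (X - C s) * (X - C u) with hP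
  obtain ⟨Q, hQ⟩ := h
  have he : P.eval a = 0 := by rw [hQ]; simp
  have he' : P.derivative.eval a = 0 := by
    rw [hQ]; simp [derivative_mul, derivative_pow]
  have hd : P.derivative.eval a =
      (a - s) * (a - u) + (a - r) * (a - u) + (a - r) * (a - s) := by
    rw [hP]; simp [derivative_mul]; ring
  rw [hd] at he'
  have : (a - r) * (a - s) * (a - u) = 0 := by
    have := he; rw [hP] at this; simpa using this
  rcases mul_eq_zero.1 this with h' | h'
  · rcases mul_eq_zero.1 h' with h'' | h''
    · have : a = r := by linear_combination h''
      subst this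
      exact mul_ne_zero (sub_ne_zero.2 hrs) (sub_ne_zero.2 hru) (by linear_combination he')
    · have : a = s := by linear_combination h''
      subst this
      exact mul_ne_zero (sub_ne_zero.2 (Ne.symm hrs)) (sub_ne_zero.2 hsu)
        (by linear_combination he')
  · have : a = u := by linear_combination h'
    subst this
    exact mul_ne_zero (sub_ne_zero.2 (Ne.symm hru)) (sub_ne_zero.2 (Ne.symm hsu))
      (by linear_combination he')

theorem NYpart1 (x₁ x₂ x₃ x₄ : ℂ) :
    ((∃ c d : ℂ, (c, d) ≠ (0, 0) ∧
        c • (![x₃, 1, x₁, 1] : Fin 4 → ℂ) + d • (![-1, x₄, -1, x₂] : Fin 4 → ℂ) = 0) ↔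
      (∃ a : ℂ, a ≠ 0 ∧ (x₁, x₂, x₃, x₄) = (-a⁻¹, a, -a⁻¹, a))) := by
  constructor
  · rintro ⟨c, d, hne, heq⟩
    have h0 := congrFun heq 0
    have h1 := congrFun heq 1
    have h2 := congrFun heq 2
    have h3 := congrFun heq 3
    simp only [Pi.add_apply, Pi.smul_apply, Matrix.cons_val_zero, Matrix.cons_val_one,
      Matrix.head_cons, Matrix.cons_val_two, Matrix.tail_cons, Matrix.cons_val_three,
      smul_eq_mul, Pi.zero_apply, mul_one, mul_neg_one] at h0 h1 h2 h3
    have hd : d ≠ 0 := by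
      rintro rfl
      have hc : c = 0 := by simpa using h1
      exact hne (by simp [hc])
    have hc : c ≠ 0 := by
      rintro rfl
      have : d = 0 := by simpa using h0
      exact hne (by simp [this])
    refine ⟨-c / d, by simp [_root_.div_eq_zero_iff, hc, hd], ?_⟩
    have hinv : -(-c / d)⁻¹ = d / c := by
      rw [neg_div, inv_neg, neg_neg, inv_div]
    simp only [Prod.ext_iff, hinv]
    refine ⟨?_, ?_, ?_, ?_⟩
    · field_simp; linear_combination h2
    · field_simp; linear_combination h3
    · field_simp; linear_combination h0
    · field_simp; linear_combination h1
  · rintro ⟨a, ha, h⟩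
    obtain ⟨h1, h2, h3, h4⟩ : x₁ = -a⁻¹ ∧ x₂ = a ∧ x₃ = -a⁻¹ ∧ x₄ = a := by
      simpa [Prod.ext_iff] using h
    refine ⟨a, -1, by simp [ha], ?_⟩
    funext i
    fin_cases i <;> simp [h1, h2, h3, h4, mul_inv_cancel₀ ha, ha]

theorem NYsurj (x₁ x₂ x₃ x₄ : ℂ)
    (hindep : ¬ ∃ c d : ℂ, (c, d) ≠ (0, 0) ∧
        c • (![x₃, 1, x₁, 1] : Fin 4 → ℂ) + d • (![-1, x₄, -1, x₂] : Fin 4 → ℂ) = 0) :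
    Function.Surjective ((NYL1 ![x₁, x₂, x₃, x₄]).prod (NYL2 ![x₁, x₂, x₃, x₄])) := by
  set p : Fin 4 → ℂ := ![x₁, x₂, x₃, x₄] with hp
  by_contra hns
  set T : (Fin 4 → ℂ) →ₗ[ℂ] ℂ × ℂ := ((NYL1 p).prod (NYL2 p)).toLinearMap with hT
  have hlt : LinearMap.range T < ⊤ := by
    rw [lt_top_iff_ne_top, Ne, LinearMap.range_eq_top]
    exact hns
  obtain ⟨f, hf0, hfbot⟩ := Submodule.exists_dual_map_eq_bot_of_lt_top hlt inferInstance
  have hfT : ∀ w, f (T w) = 0 := by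
    intro w
    have : f (T w) ∈ (LinearMap.range T).map f := ⟨T w, ⟨w, rfl⟩, rfl⟩
    rwa [hfbot, Submodule.mem_bot] at this
  set c : ℂ := f (1, 0) with hc
  set d : ℂ := f (0, 1) with hd
  have hfcd : ∀ z : ℂ × ℂ, f z = z.1 * c + z.2 * d := by
    intro z
    have : z = z.1 • ((1 : ℂ), (0 : ℂ)) + z.2 • ((0 : ℂ), (1 : ℂ)) := by
      simp [Prod.ext_iff]
    rw [this, map_add, f.map_smul, f.map_smul, smul_eq_mul, smul_eq_mul]
    simp
    rfl
  have hcd0 : (c, d) ≠ (0, 0) := by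
    intro h
    have hc0 : c = 0 := congrArg Prod.fst h
    have hd0 : d = 0 := congrArg Prod.snd h
    apply hf0
    refine LinearMap.ext fun z => ?_
    rw [hfcd, hc0, hd0]
    simp
  apply hindep
  refine ⟨c, d, hcd0, ?_⟩
  funext i
  have hi := hfT (Pi.single i 1)
  rw [hfcd] at hi
  have hT1 : (T (Pi.single i 1)).1 = NYL1 p (Pi.single i 1) := rfl
  have hT2 : (T (Pi.single i 1)).2 = NYL2 p (Pi.single i 1) := rfl
  rw [hT1, hT2, NYL1app, NYL2app] at hi
  fin_cases i <;> simpa [hp, Pi.single_apply, mul_comm] using hi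

/-- The gradients `∇e₁ = (x₃,1,x₁,1)` and `∇e₂ = (−1,x₄,−1,x₂)` are linearly
dependent iff `x = (−a⁻¹, a, −a⁻¹, a)` for some `a ≠ 0`; at such a point the
characteristic polynomial of `M(x)` has the repeated root `a`; consequently, if
the characteristic polynomial of `M(x)` has three distinct roots, the
differential of `(e₁,e₂)` at `x` is surjective. -/
theorem stmt_11 (x₁ x₂ x₃ x₄ : ℂ) :
    ((∃ c d : ℂ, (c, d) ≠ (0, 0) ∧
        c • (![x₃, 1, x₁, 1] : Fin 4 → ℂ) + d • (![-1, x₄, -1, x₂] : Fin 4 → ℂ) = 0) ↔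
      (∃ a : ℂ, a ≠ 0 ∧ (x₁, x₂, x₃, x₄) = (-a⁻¹, a, -a⁻¹, a))) ∧
    (∀ a : ℂ, a ≠ 0 → (x₁, x₂, x₃, x₄) = (-a⁻¹, a, -a⁻¹, a) →
      (X - C a) ^ 2 ∣ (NYmonodromy x₁ x₂ x₃ x₄).charpoly) ∧
    ((∃ r s u : ℂ, r ≠ s ∧ r ≠ u ∧ s ≠ u ∧
        (NYmonodromy x₁ x₂ x₃ x₄).charpoly = (X - C r) * (X - C s) * (X - C u)) →
      Function.Surjective
        (fderiv ℂ (fun x : Fin 4 → ℂ => (NYe₁ x, NYe₂ x)) ![x₁, x₂, x₃, x₄])) := by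
  have hdvd : ∀ a : ℂ, a ≠ 0 → (x₁, x₂, x₃, x₄) = (-a⁻¹, a, -a⁻¹, a) →
      (X - C a) ^ 2 ∣ (NYmonodromy x₁ x₂ x₃ x₄).charpoly := by
    intro a ha h
    obtain ⟨h1, h2, h3, h4⟩ : x₁ = -a⁻¹ ∧ x₂ = a ∧ x₃ = -a⁻¹ ∧ x₄ = a := by
      simpa [Prod.ext_iff] using h
    rw [h1, h2, h3, h4, NYcharpoly a a⁻¹ (mul_inv_cancel₀ ha)]
    exact Dvd.intro _ rfl
  refine ⟨NYpart1 x₁ x₂ x₃ x₄, hdvd, ?_⟩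
  rintro ⟨r, s, u, hrs, hru, hsu, hfac⟩
  rw [(NYhder ![x₁, x₂, x₃, x₄]).fderiv]
  apply NYsurj
  rw [NYpart1 x₁ x₂ x₃ x₄]
  rintro ⟨a, ha, heq⟩
  exact NYnosq r s u a hrs hru hsu (hfac ▸ hdvd a ha heq)
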